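/- Let ρ ∈ (0,1), let p, m be positive integers, and let A be a p × m matrix whose entries are bounded holomorphic functions on the open unit disk 𝔻, regarded via restriction as a matrix over C_b(A_ρ). Then the Gelfand norm of A equals its H∞ norm: max_{φ ∈ 𝔐} ‖Â(φ)‖ = sup_{z ∈ 𝔻} ‖A(z)‖, where 𝔐 is the character space of C_b(A_ρ), Â(φ) = (φ(A_{ij}|_{A_ρ}))_{i,j}, and ‖·‖ denotes the operator norm from ℂ^m to ℂ^p with respect to the Euclidean norms. -/

import Mathlib

/-- The open annulus `{z : ℂ | ρ < |z| < 1}`. -/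
def annulus (ρ : ℝ) : Set ℂ := {z : ℂ | ρ < ‖z‖ ∧ ‖z‖ < 1}

/-- The operator norm of a complex `p × m` matrix, viewed as a linear map
`ℂ^m → ℂ^p` with respect to the Euclidean norms. -/
noncomputable def matOpNorm {p m : ℕ} (M : Matrix (Fin p) (Fin m) ℂ) : ℝ :=
  ‖LinearMap.toContinuousLinearMap (Matrix.toEuclideanLin M)‖

open BoundedContinuousFunction WeakDual Metric

attribute [local instance] Matrix.normedAddCommGroup Matrix.normedSpace

/-- The linear map sending a matrix to the associated continuous linear map between
Euclidean spaces, as a continuous linear map. -/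
noncomputable def matL (p m : ℕ) :
    Matrix (Fin p) (Fin m) ℂ →L[ℂ] (EuclideanSpace ℂ (Fin m) →L[ℂ] EuclideanSpace ℂ (Fin p)) :=
  LinearMap.toContinuousLinearMap
    ((LinearMap.toContinuousLinearMap :
        (EuclideanSpace ℂ (Fin m) →ₗ[ℂ] EuclideanSpace ℂ (Fin p)) ≃ₗ[ℂ]
        (EuclideanSpace ℂ (Fin m) →L[ℂ] EuclideanSpace ℂ (Fin p))).toLinearMap.comp
      (Matrix.toEuclideanLin).toLinearMap)

theorem matOpNorm_eq {p m : ℕ} (M : Matrix (Fin p) (Fin m) ℂ) :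
    matOpNorm M = ‖matL p m M‖ := rfl

theorem matOpNorm_continuous (p m : ℕ) :
    Continuous fun M : Matrix (Fin p) (Fin m) ℂ => matOpNorm M :=
  (matL p m).continuous.norm

/-- The evaluation character on bounded continuous functions. -/
noncomputable def evChar {X : Type*} [TopologicalSpace X] (x : X) :
    characterSpace ℂ (X →ᵇ ℂ) :=
  ⟨(BoundedContinuousFunction.evalCLM ℂ x : WeakDual ℂ (X →ᵇ ℂ)),
    ⟨fun h => one_ne_zero (α := ℂ) (by
      calc (1 : ℂ) = (BoundedContinuousFunction.evalCLM ℂ x : (X →ᵇ ℂ) →L[ℂ] ℂ) 1 := by simp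
        _ = (0 : WeakDual ℂ (X →ᵇ ℂ)) 1 := by rw [← h]; rfl
        _ = 0 := rfl), fun f g => rfl⟩⟩

theorem evChar_apply {X : Type*} [TopologicalSpace X] (x : X) (f : X →ᵇ ℂ) :
    evChar x f = f x := rfl

/-- A character applied entrywise to a matrix of bounded continuous functions yields a matrix
in the closure of the set of pointwise values. -/
theorem char_mem_closure {X : Type*} [TopologicalSpace X] (p m : ℕ)
    (φ : characterSpace ℂ (X →ᵇ ℂ)) (F : Matrix (Fin p) (Fin m) (X →ᵇ ℂ)) :
    (Matrix.of fun i j => φ (F i j)) ∈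
      closure (Set.range fun x : X =>
        (Matrix.of fun i j => F i j x : Matrix (Fin p) (Fin m) ℂ)) := by
  classical
  by_contra hcl
  replace hcl := mt Metric.mem_closure_iff.mpr hcl
  push_neg at hcl
  obtain ⟨ε, hε, hd⟩ := hcl
  set c : Matrix (Fin p) (Fin m) ℂ := Matrix.of fun i j => φ (F i j) with hc
  have hent : ∀ x : X, ∃ i j, ε ≤ ‖F i j x - c i j‖ := by
    intro x
    have h1 := hd _ ⟨x, rfl⟩
    by_contra hno
    push_neg at hno
    have : dist c (Matrix.of fun i j => F i j x) < ε := by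
      show @dist (Fin p → Fin m → ℂ) _ (fun i j => c i j) (fun i j => F i j x) < ε
      rw [dist_pi_lt_iff hε]
      intro i
      rw [dist_pi_lt_iff hε]
      intro j
      rw [Complex.dist_eq]
      calc ‖c i j - F i j x‖ = ‖F i j x - c i j‖ := by
            rw [norm_sub_rev]
        _ < ε := hno i j
    exact absurd this (not_lt.mpr h1)
  set G : (X →ᵇ ℂ) := ∑ i : Fin p, ∑ j : Fin m,
    (star (F i j) - (starRingEnd ℂ) (c i j) • 1) * (F i j - c i j • 1) with hG
  have hφG : φ G = 0 := by
    rw [hG, map_sum]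
    refine Finset.sum_eq_zero fun i _ => ?_
    rw [map_sum]
    refine Finset.sum_eq_zero fun j _ => ?_
    rw [map_mul, map_sub, map_smul, map_one]
    simp [hc]
  have hGapp : ∀ x : X, G x = ((∑ i : Fin p, ∑ j : Fin m,
      Complex.normSq (F i j x - c i j) : ℝ) : ℂ) := by
    intro x
    rw [hG]
    push_cast
    rw [BoundedContinuousFunction.coe_sum, Finset.sum_apply]
    refine Finset.sum_congr rfl fun i _ => ?_
    rw [BoundedContinuousFunction.coe_sum, Finset.sum_apply]
    refine Finset.sum_congr rfl fun j _ => ?_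
    simp only [BoundedContinuousFunction.mul_apply, BoundedContinuousFunction.sub_apply,
      BoundedContinuousFunction.smul_apply, BoundedContinuousFunction.coe_one, Pi.one_apply,
      BoundedContinuousFunction.star_apply, smul_eq_mul, mul_one, Complex.star_def]
    rw [Complex.normSq_eq_conj_mul_self, map_sub]
  have hlb : ∀ x : X, ε ^ 2 ≤ ‖G x‖ := by
    intro x
    obtain ⟨i, j, hij⟩ := hent x
    have hre : ε ^ 2 ≤ (G x).re := by
      rw [hGapp x, Complex.ofReal_re]
      calc ε ^ 2 ≤ Complex.normSq (F i j x - c i j) := by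
            rw [← Complex.sq_norm]
            exact pow_le_pow_left₀ hε.le hij 2
        _ ≤ ∑ j : Fin m, Complex.normSq (F i j x - c i j) :=
            Finset.single_le_sum (f := fun j' => Complex.normSq (F i j' x - c i j'))
              (fun _ _ => Complex.normSq_nonneg _) (Finset.mem_univ j)
        _ ≤ ∑ i : Fin p, ∑ j : Fin m, Complex.normSq (F i j x - c i j) :=
            Finset.single_le_sum
              (f := fun i' => ∑ j' : Fin m, Complex.normSq (F i' j' x - c i' j'))
              (fun _ _ => Finset.sum_nonneg fun _ _ => Complex.normSq_nonneg _)
              (Finset.mem_univ i)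
    exact hre.trans (Complex.re_le_norm _)
  have hε2 : (0:ℝ) < ε ^ 2 := by positivity
  have hGne : ∀ x : X, G x ≠ 0 := by
    intro x h
    have := hlb x
    rw [h, norm_zero] at this
    exact absurd this (not_le.mpr hε2)
  set Ginv : X →ᵇ ℂ := BoundedContinuousFunction.ofNormedAddCommGroup (fun x => (G x)⁻¹)
    (G.continuous.inv₀ hGne) ((ε^2)⁻¹) (fun x => by
      rw [norm_inv]
      refine inv_anti₀ hε2 ?_
      exact hlb x) with hGinv
  have h1 : G * Ginv = 1 := by
    ext x
    simp only [BoundedContinuousFunction.mul_apply, hGinv,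
      BoundedContinuousFunction.coe_ofNormedAddCommGroup, BoundedContinuousFunction.coe_one,
      Pi.one_apply]
    exact mul_inv_cancel₀ (hGne x)
  have h2 := congrArg φ h1
  rw [map_mul, hφG, zero_mul, map_one] at h2
  exact zero_ne_one h2

/-- Maximum modulus principle for the operator norm of a matrix of holomorphic functions. -/
theorem maxmod (ρ : ℝ) (hρ : ρ ∈ Set.Ioo (0:ℝ) 1) {p m : ℕ}
    (A : Matrix (Fin p) (Fin m) (ℂ → ℂ))
    (hA : ∀ i j, DifferentiableOn ℂ (A i j) (Metric.ball 0 1)) {C : ℝ}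
    (hC : ∀ z ∈ annulus ρ, matOpNorm (Matrix.of fun i j => A i j z) ≤ C)
    {w : ℂ} (hw : w ∈ Metric.ball (0:ℂ) 1) :
    matOpNorm (Matrix.of fun i j => A i j w) ≤ C := by
  set r : ℝ := (max ρ (‖w‖) + 1) / 2 with hr
  have hw1 : ‖w‖ < 1 := by simpa using mem_ball_zero_iff.mp hw
  have hmax1 : max ρ (‖w‖) < 1 := max_lt hρ.2 hw1
  have hmax0 : 0 ≤ max ρ (‖w‖) := le_max_of_le_left hρ.1.le
  have hr1 : r < 1 := by rw [hr]; linarith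
  have hr0 : 0 < r := by rw [hr]; linarith
  have hrρ : ρ < r := by
    have := le_max_left ρ (‖w‖)
    rw [hr]; linarith
  have hwr : ‖w‖ < r := by
    have := le_max_right ρ (‖w‖)
    rw [hr]; linarith
  set f : ℂ → (EuclideanSpace ℂ (Fin m) →L[ℂ] EuclideanSpace ℂ (Fin p)) :=
    fun z => matL p m (Matrix.of fun i j => A i j z) with hf
  have hAmat : DifferentiableOn ℂ
      (fun z => (Matrix.of fun i j => A i j z : Matrix (Fin p) (Fin m) ℂ))
      (Metric.ball 0 1) := by
    apply differentiableOn_pi.mpr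
    intro i
    apply differentiableOn_pi.mpr
    intro j
    exact hA i j
  have hdiff : DifferentiableOn ℂ f (Metric.ball (0:ℂ) 1) :=
    (matL p m).differentiable.comp_differentiableOn hAmat
  have hsub : closure (Metric.ball (0:ℂ) r) ⊆ Metric.ball (0:ℂ) 1 := by
    rw [closure_ball (0:ℂ) hr0.ne']
    exact closedBall_subset_ball hr1
  have hd2 : DiffContOnCl ℂ f (Metric.ball (0:ℂ) r) := (hdiff.mono hsub).diffContOnCl
  have hfr : ∀ z ∈ frontier (Metric.ball (0:ℂ) r), ‖f z‖ ≤ C := by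
    intro z hz
    rw [frontier_ball (0:ℂ) hr0.ne'] at hz
    have hzr : ‖z‖ = r := by
      exact mem_sphere_zero_iff_norm.mp hz
    have hz' : z ∈ annulus ρ := ⟨by rw [hzr]; exact hrρ, by rw [hzr]; exact hr1⟩
    rw [hf, ← matOpNorm_eq]
    exact hC z hz'
  have hwmem : w ∈ closure (Metric.ball (0:ℂ) r) :=
    subset_closure (mem_ball_zero_iff.mpr (by exact hwr))
  have := Complex.norm_le_of_forall_mem_frontier_norm_le isBounded_ball hd2 hfr hwmem
  rw [hf, ← matOpNorm_eq] at this
  exact this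

/-- For a `p × m` matrix `A` with entries bounded holomorphic on the unit disk, regarded
via restriction as a matrix `F` over `C_b(A_ρ)`, the Gelfand norm of `F` equals the
`H^∞` norm of `A`: the maximum over the character space of `‖F̂(φ)‖` equals
`sup_{z ∈ 𝔻} ‖A(z)‖` (operator norms from `ℂ^m` to `ℂ^p`), and is attained. -/
theorem gelfand_norm_eq_Hinfty_norm (ρ : ℝ) (hρ : ρ ∈ Set.Ioo (0 : ℝ) 1)
    (p m : ℕ) (hp : 0 < p) (hm : 0 < m)
    (A : Matrix (Fin p) (Fin m) (ℂ → ℂ))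
    (hA : ∀ i j, DifferentiableOn ℂ (A i j) (Metric.ball 0 1))
    (hb : ∀ i j, ∃ M : ℝ, ∀ z ∈ Metric.ball (0 : ℂ) 1, ‖A i j z‖ ≤ M)
    (F : Matrix (Fin p) (Fin m) (BoundedContinuousFunction (annulus ρ) ℂ))
    (hF : ∀ i j, ∀ z : annulus ρ, F i j z = A i j (z : ℂ)) :
    IsGreatest
      (Set.range fun φ : WeakDual.characterSpace ℂ (BoundedContinuousFunction (annulus ρ) ℂ) =>
        matOpNorm (Matrix.of fun i j => φ (F i j)))
      (⨆ z : Metric.ball (0 : ℂ) 1, matOpNorm (Matrix.of fun i j => A i j (z : ℂ))) := by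
  classical
  obtain ⟨hρ0, hρ1⟩ := hρ
  have hann_ne : Set.Nonempty (annulus ρ) := by
    refine ⟨(((ρ+1)/2 : ℝ) : ℂ), ?_, ?_⟩
    · rw [Complex.norm_real, Real.norm_eq_abs, abs_of_nonneg (by linarith)]
      linarith
    · rw [Complex.norm_real, Real.norm_eq_abs, abs_of_nonneg (by linarith)]
      linarith
  haveI : Nonempty (annulus ρ) := hann_ne.to_subtype
  haveI : Nonempty (Metric.ball (0:ℂ) 1) := ⟨⟨0, mem_ball_self one_pos⟩⟩
  have hsub : ∀ z ∈ annulus ρ, z ∈ Metric.ball (0:ℂ) 1 := fun z hz =>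
    mem_ball_zero_iff.mpr (by exact hz.2)
  set g : ℂ → ℝ := fun z => matOpNorm (Matrix.of fun i j => A i j z) with hg
  -- a uniform bound on `g` over the ball
  choose Mb hMb using hb
  set C0 : ℝ := ∑ i : Fin p, ∑ j : Fin m, |Mb i j| with hC0
  have hC0e : ∀ i j, |Mb i j| ≤ C0 := by
    intro i j
    rw [hC0]
    calc |Mb i j| ≤ ∑ j' : Fin m, |Mb i j'| :=
          Finset.single_le_sum (f := fun j' => |Mb i j'|)
            (fun _ _ => abs_nonneg _) (Finset.mem_univ j)
      _ ≤ ∑ i' : Fin p, ∑ j' : Fin m, |Mb i' j'| :=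
          Finset.single_le_sum (f := fun i' => ∑ j' : Fin m, |Mb i' j'|)
            (fun _ _ => Finset.sum_nonneg fun _ _ => abs_nonneg _) (Finset.mem_univ i)
  have hC00 : 0 ≤ C0 := by
    rw [hC0]
    exact Finset.sum_nonneg fun _ _ => Finset.sum_nonneg fun _ _ => abs_nonneg _
  set B : ℝ := (matL p m).opNorm * C0 with hB
  have hgB : ∀ z ∈ Metric.ball (0:ℂ) 1, g z ≤ B := by
    intro z hz
    have hMn : ‖(Matrix.of fun i j => A i j z : Matrix (Fin p) (Fin m) ℂ)‖ ≤ C0 := by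
      refine (pi_norm_le_iff_of_nonneg hC00).mpr fun i => ?_
      refine (pi_norm_le_iff_of_nonneg hC00).mpr fun j => ?_
      calc ‖A i j z‖ = ‖A i j z‖ := rfl
        _ ≤ Mb i j := hMb i j z hz
        _ ≤ |Mb i j| := le_abs_self _
        _ ≤ C0 := hC0e i j
    calc g z = ‖matL p m (Matrix.of fun i j => A i j z)‖ := rfl
      _ ≤ (matL p m).opNorm * ‖(Matrix.of fun i j => A i j z : Matrix (Fin p) (Fin m) ℂ)‖ :=
          (matL p m).le_opNorm _
      _ ≤ B := by
          rw [hB]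
          exact mul_le_mul_of_nonneg_left hMn (matL p m).opNorm_nonneg
  have hbdd : BddAbove (Set.range fun z : Metric.ball (0:ℂ) 1 => g z) := by
    refine ⟨B, ?_⟩
    rintro _ ⟨z, rfl⟩
    exact hgB z z.2
  have hbddA : BddAbove (Set.range fun x : annulus ρ => g x) := by
    refine ⟨B, ?_⟩
    rintro _ ⟨x, rfl⟩
    exact hgB x (hsub x x.2)
  set S : ℝ := ⨆ z : Metric.ball (0:ℂ) 1, g z with hS
  set T : ℝ := ⨆ x : annulus ρ, g x with hT
  have hgle : ∀ z ∈ Metric.ball (0:ℂ) 1, g z ≤ S := fun z hz =>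
    le_ciSup hbdd (⟨z, hz⟩ : Metric.ball (0:ℂ) 1)
  have hTle : ∀ x ∈ annulus ρ, g x ≤ T := fun x hx =>
    le_ciSup hbddA (⟨x, hx⟩ : annulus ρ)
  have hST : S = T := by
    refine le_antisymm (ciSup_le fun z => ?_) (ciSup_le fun x => hgle x (hsub x x.2))
    exact maxmod ρ ⟨hρ0, hρ1⟩ A hA (fun x hx => hTle x hx) z.2
  constructor
  · -- the supremum is attained at some character
    have hTmem : ∀ n : ℕ, ∃ x : annulus ρ, T - 1/(n+1) < g x := by
      intro n
      have hpos : (0:ℝ) < 1/((n:ℝ)+1) := by positivity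
      have h1 : T - 1/((n:ℝ)+1) < T := by linarith
      rw [hT] at h1
      obtain ⟨x, hx⟩ := exists_lt_of_lt_ciSup h1
      exact ⟨x, hx⟩
    choose x hx using hTmem
    have htend : Filter.Tendsto (fun n => g (x n)) Filter.atTop (nhds T) := by
      have hlow : Filter.Tendsto (fun n : ℕ => T - 1/((n:ℝ)+1)) Filter.atTop (nhds T) := by
        have h0 : Filter.Tendsto (fun n : ℕ => 1/((n:ℝ)+1)) Filter.atTop (nhds 0) :=
          tendsto_one_div_add_atTop_nhds_zero_nat
        simpa using Filter.Tendsto.sub (tendsto_const_nhds (x := T)) h0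
      exact tendsto_of_tendsto_of_tendsto_of_le_of_le hlow tendsto_const_nhds
        (fun n => (hx n).le) (fun n => hTle _ (x n).2)
    set U : Ultrafilter ℕ := Ultrafilter.of Filter.atTop with hU
    have hUle : (U : Filter ℕ) ≤ Filter.atTop := Ultrafilter.of_le _
    obtain ⟨φ₀, -, hφ₀⟩ := isCompact_univ.ultrafilter_le_nhds
      (U.map (fun n => evChar (x n))) (Filter.le_principal_iff.mpr Filter.univ_mem)
    have hφ₀' : Filter.Tendsto (fun n => evChar (x n)) (U : Filter ℕ) (nhds φ₀) := hφ₀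
    have hev : ∀ i j, Filter.Tendsto (fun n => A i j ((x n : ℂ)))
        (U : Filter ℕ) (nhds (φ₀ (F i j))) := by
      intro i j
      have hcont : Continuous fun ψ : characterSpace ℂ (annulus ρ →ᵇ ℂ) => ψ (F i j) :=
        (WeakDual.eval_continuous (F i j)).comp continuous_subtype_val
      have := (hcont.tendsto φ₀).comp hφ₀'
      simpa [Function.comp_def, evChar_apply, hF] using this
    have hmat : Filter.Tendsto
        (fun n => (Matrix.of fun i j => A i j ((x n : ℂ)) : Matrix (Fin p) (Fin m) ℂ))
        (U : Filter ℕ) (nhds (Matrix.of fun i j => φ₀ (F i j))) := by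
      show Filter.Tendsto (fun n => (fun i j => A i j ((x n : ℂ)) : Fin p → Fin m → ℂ))
        (U : Filter ℕ) (nhds (fun i j => φ₀ (F i j) : Fin p → Fin m → ℂ))
      rw [tendsto_pi_nhds]
      intro i
      rw [tendsto_pi_nhds]
      intro j
      exact hev i j
    have h1 : Filter.Tendsto (fun n => g ((x n : ℂ))) (U : Filter ℕ)
        (nhds (matOpNorm (Matrix.of fun i j => φ₀ (F i j)))) := by
      have := ((matOpNorm_continuous p m).tendsto _).comp hmat
      simpa [hg, Function.comp_def] using this
    have h2 : Filter.Tendsto (fun n => g ((x n : ℂ))) (U : Filter ℕ) (nhds T) :=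
      htend.mono_left hUle
    have hattain : matOpNorm (Matrix.of fun i j => φ₀ (F i j)) = T :=
      tendsto_nhds_unique h1 h2
    refine ⟨φ₀, ?_⟩
    show matOpNorm (Matrix.of fun i j => φ₀ (F i j)) = S
    rw [hattain, hST]
  · -- every character value is bounded by the supremum
    rintro _ ⟨φ, rfl⟩
    have hmem := char_mem_closure p m φ F
    have hrange : (Set.range fun x : annulus ρ =>
        (Matrix.of fun i j => F i j x : Matrix (Fin p) (Fin m) ℂ))
        ⊆ {M : Matrix (Fin p) (Fin m) ℂ | matOpNorm M ≤ T} := by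
      rintro _ ⟨x, rfl⟩
      have hFx : (Matrix.of fun i j => F i j x : Matrix (Fin p) (Fin m) ℂ)
          = Matrix.of fun i j => A i j (x : ℂ) := by
        ext i j
        exact hF i j x
      show matOpNorm (Matrix.of fun i j => F i j x) ≤ T
      rw [hFx]
      exact hTle x x.2
    have hclosed : IsClosed {M : Matrix (Fin p) (Fin m) ℂ | matOpNorm M ≤ T} :=
      isClosed_le (matOpNorm_continuous p m) continuous_const
    have hle := closure_minimal hrange hclosed hmem
    calc matOpNorm (Matrix.of fun i j => φ (F i j)) ≤ T := hle
      _ = S := hST.symm
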